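/- Let d ∈ ℝ and C, ρ > 0. Let f : [1, ∞) → ℂ be a function such that for every natural number N and every r ≥ 1, |f(r)| ≤ C · ρ^N · N! · r^{d − N}. Then there exist C' > 0 and c > 0 (depending only on C, ρ, d) such that |f(r)| ≤ C' · e^{−c r} for all r ≥ 1. -/

import Mathlib

lemma pow_div_factorial_le_exp' {x : ℝ} (hx : 0 ≤ x) (m : ℕ) :
    x ^ m / m.factorial ≤ Real.exp x := by
  calc x ^ m / m.factorial
      ≤ ∑ i ∈ Finset.range (m + 1), x ^ i / i.factorial := by
        apply Finset.single_le_sum (f := fun i => x ^ i / (i.factorial : ℝ))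
          (fun i _ => by positivity) (Finset.self_mem_range_succ m)
    _ ≤ Real.exp x := Real.sum_le_exp_of_nonneg hx _

/-- **A function with vanishing formal analytic amplitude is exponentially small**: if
`|f(r)| ≤ C ρ^N N! r^{d−N}` for every order `N` and every `r ≥ 1`, then
`|f(r)| ≤ C' e^{−c r}` for some `C', c > 0` depending only on `C, ρ, d`. -/
theorem stmt_6 (d C ρ : ℝ) (hC : 0 < C) (hρ : 0 < ρ)
    (f : ℝ → ℂ)
    (hf : ∀ (N : ℕ) (r : ℝ), 1 ≤ r →
      ‖f r‖ ≤ C * ρ ^ N * (N.factorial : ℝ) * r ^ (d - (N : ℝ))) :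
    ∃ C' : ℝ, 0 < C' ∧ ∃ c : ℝ, 0 < c ∧
      ∀ r : ℝ, 1 ≤ r → ‖f r‖ ≤ C' * Real.exp (-c * r) := by
  have hlog2 : 0 < Real.log 2 := Real.log_pos one_lt_two
  set a : ℝ := Real.log 2 / (2 * ρ) with ha
  set b : ℝ := Real.log 2 / (4 * ρ) with hb
  have hbpos : 0 < b := div_pos hlog2 (by positivity)
  set m : ℕ := ⌈|d|⌉₊ with hm
  refine ⟨C * 2 * ((m.factorial : ℝ) / b ^ m), by positivity, b, hbpos, ?_⟩
  intro r hr
  have hr0 : 0 < r := lt_of_lt_of_le one_pos hr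
  set N : ℕ := ⌊r / (2 * ρ)⌋₊ with hN
  have hNle : (N : ℝ) ≤ r / (2 * ρ) := Nat.floor_le (by positivity)
  have hNgt : r / (2 * ρ) < N + 1 := Nat.lt_floor_add_one _
  -- step 1 : ρ^N * N! ≤ (r/2)^N
  have h1 : ρ ^ N * (N.factorial : ℝ) ≤ (r / 2) ^ N := by
    have hfac : (N.factorial : ℝ) ≤ (N : ℝ) ^ N := by
      exact_mod_cast Nat.factorial_le_pow N
    calc ρ ^ N * (N.factorial : ℝ) ≤ ρ ^ N * (N : ℝ) ^ N :=
          mul_le_mul_of_nonneg_left hfac (by positivity)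
      _ = (ρ * N) ^ N := (mul_pow _ _ _).symm
      _ ≤ (r / 2) ^ N := by
          apply pow_le_pow_left₀ (by positivity)
          calc ρ * N ≤ ρ * (r / (2 * ρ)) :=
                mul_le_mul_of_nonneg_left hNle hρ.le
            _ = r / 2 := by field_simp
  -- step 2 : rewrite r ^ (d - N)
  have hrw : r ^ (d - (N : ℝ)) = r ^ d / r ^ N := by
    rw [Real.rpow_sub hr0, Real.rpow_natCast]
  -- step 3 : (1/2)^N ≤ 2 * exp (-a * r)
  have h2 : ((1 : ℝ) / 2) ^ N ≤ 2 * Real.exp (-a * r) := by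
    have : ((1 : ℝ) / 2) ^ N = Real.exp ((N : ℝ) * Real.log (1 / 2)) := by
      rw [← Real.rpow_natCast, Real.rpow_def_of_pos (by norm_num : (0:ℝ) < 1/2), mul_comm]
    rw [this, Real.log_div one_ne_zero two_ne_zero, Real.log_one]
    have hNge : r / (2 * ρ) - 1 ≤ (N : ℝ) := by linarith
    calc Real.exp ((N : ℝ) * (0 - Real.log 2))
        ≤ Real.exp ((r / (2 * ρ) - 1) * (0 - Real.log 2)) := by
          apply Real.exp_le_exp.mpr
          nlinarith
      _ = 2 * Real.exp (-a * r) := by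
          rw [show (r / (2 * ρ) - 1) * (0 - Real.log 2)
                = Real.log 2 + (-a * r) by
                  field_simp [ha]
                  have h2a : ρ * a * 2 = Real.log 2 := by rw [ha]; field_simp
                  linear_combination r * h2a,
            Real.exp_add, Real.exp_log two_pos]
  -- step 4 : r ^ d ≤ (m! / b^m) * exp (b * r)
  have h3 : r ^ d ≤ ((m.factorial : ℝ) / b ^ m) * Real.exp (b * r) := by
    have hd : d ≤ (m : ℝ) := le_trans (le_abs_self d) (Nat.le_ceil _)
    have h4 : r ^ d ≤ r ^ (m : ℝ) := Real.rpow_le_rpow_of_exponent_le hr hd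
    rw [Real.rpow_natCast] at h4
    refine h4.trans ?_
    have h5 : (b * r) ^ m / m.factorial ≤ Real.exp (b * r) :=
      pow_div_factorial_le_exp' (by positivity) m
    have hbm : (0:ℝ) < b ^ m := by positivity
    rw [mul_pow] at h5
    rw [div_mul_eq_mul_div, le_div_iff₀ (by positivity)]
    have := (div_le_iff₀ (by positivity : (0:ℝ) < (m.factorial : ℝ))).mp h5
    nlinarith [pow_nonneg hbpos.le m, pow_nonneg hr0.le m]
  -- combine
  have key := hf N r hr
  rw [hrw] at key
  have hpow : (r / 2) ^ N / r ^ N = ((1:ℝ)/2) ^ N := by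
    rw [div_pow, div_div, ← mul_pow, ← div_pow]
    congr 1
    field_simp
  calc ‖f r‖ ≤ C * ρ ^ N * (N.factorial : ℝ) * (r ^ d / r ^ N) := key
    _ = C * (ρ ^ N * (N.factorial : ℝ) / r ^ N) * r ^ d := by ring
    _ ≤ C * (((1:ℝ)/2) ^ N) * r ^ d := by
        apply mul_le_mul_of_nonneg_right _ (Real.rpow_nonneg hr0.le d)
        apply mul_le_mul_of_nonneg_left _ hC.le
        rw [← hpow]
        exact div_le_div_of_nonneg_right h1 (by positivity) |>.trans_eq rfl
    _ ≤ C * (2 * Real.exp (-a * r)) * (((m.factorial : ℝ) / b ^ m) * Real.exp (b * r)) := by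
        apply mul_le_mul
        · exact mul_le_mul_of_nonneg_left h2 hC.le
        · exact h3
        · exact Real.rpow_nonneg hr0.le d
        · positivity
    _ = C * 2 * ((m.factorial : ℝ) / b ^ m) * (Real.exp (-a * r) * Real.exp (b * r)) := by ring
    _ = C * 2 * ((m.factorial : ℝ) / b ^ m) * Real.exp (-b * r) := by
        rw [← Real.exp_add]
        congr 1
        rw [ha, hb]
        field_simp
        ring
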